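/- Let a_1, …, a_m be integers all strictly greater than 1, let A_j be the cycle C_{a_j} for each j, let A = A_1 ⊕ ⋯ ⊕ A_m, and let k ≥ 1 be an integer. Then there exist two FDDS X and Y that are not isomorphic, both of which are permutations (their transition functions are bijective), such that A_j × X^k ≅ A_j × Y^k for every 1 ≤ j ≤ m, and consequently A × X^k ≅ A × Y^k. -/

import Mathlib

/-- Isomorphism of finite dynamical systems: a bijection commuting with the maps. -/
def FddsIso {α β : Type} (f : α → α) (g : β → β) : Prop :=
  ∃ e : α ≃ β, ⇑e ∘ f = g ∘ ⇑e

/-- A state is periodic if some positive iterate fixes it. -/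
def IsPeriodicState {α : Type} (f : α → α) (x : α) : Prop :=
  ∃ n > 0, f^[n] x = x

/-- The vertex set of the unroll of `(α, f)`. -/
def UnrollSet {α : Type} (f : α → α) : Set (α × ℕ) :=
  {p | IsPeriodicState f (f^[p.2] p.1)}

/-- The parent map of the unroll. -/
def unrollMap {α : Type} (f : α → α) (q : UnrollSet f) : UnrollSet f :=
  if h : q.1.2 = 0 then q
  else ⟨(f q.1.1, q.1.2 - 1), by
    obtain ⟨⟨x, k⟩, hq⟩ := q
    simp only at h
    obtain ⟨k', rfl⟩ := Nat.exists_eq_succ_of_ne_zero h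
    simpa [UnrollSet, Function.iterate_succ_apply] using hq⟩

/-- Isomorphism of unrolls. -/
def UnrollIso {α β : Type} (f : α → α) (g : β → β) : Prop :=
  ∃ φ : UnrollSet f ≃ UnrollSet g, ⇑φ ∘ unrollMap f = unrollMap g ∘ ⇑φ

/-- Vertices of the cut at depth `n` of the unroll. -/
def CutSet {α : Type} (f : α → α) (n : ℕ) : Set (α × ℕ) :=
  {p | p ∈ UnrollSet f ∧ p.2 ≤ n}

/-- The parent map of the cut at depth `n`. -/
def cutMap {α : Type} (f : α → α) (n : ℕ) (q : CutSet f n) : CutSet f n :=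
  if h : q.1.2 = 0 then q
  else ⟨(f q.1.1, q.1.2 - 1), by
    obtain ⟨⟨x, k⟩, hq⟩ := q
    obtain ⟨hq1, hq2⟩ := hq
    simp only at h hq2 ⊢
    obtain ⟨k', rfl⟩ := Nat.exists_eq_succ_of_ne_zero h
    refine ⟨by simpa [UnrollSet, Function.iterate_succ_apply] using hq1, by omega⟩⟩

/-- Isomorphism of cuts at depth `n`. -/
def CutIso {α β : Type} (f : α → α) (g : β → β) (n : ℕ) : Prop :=
  ∃ φ : CutSet f n ≃ CutSet g n, ⇑φ ∘ cutMap f n = cutMap g n ∘ ⇑φ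

/-- The states of the components whose cycle length divides `p`. -/
def DivSet {α : Type} (f : α → α) (p : ℕ) : Set α :=
  {x | ∃ N, f^[N + p] x = f^[N] x}

/-- The restriction of `f` to `DivSet f p`. -/
def divMap {α : Type} (f : α → α) (p : ℕ) (q : DivSet f p) : DivSet f p :=
  ⟨f q.1, by
    obtain ⟨x, N, hN⟩ := q
    exact ⟨N, by
      rw [← Function.iterate_succ_apply, ← Function.iterate_succ_apply,
        Function.iterate_succ_apply', Function.iterate_succ_apply', hN]⟩⟩

/-- `k`-th power of an FDDS: map on `Fin k → α`. -/
def powMap {α : Type} (f : α → α) (k : ℕ) (v : Fin k → α) : Fin k → α := f ∘ v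

/-- Evaluation of the polynomial `Σ_{i=0}^m A_i X^i` at `(α, f)`. -/
def polyEval {m : ℕ} {γ : Fin (m + 1) → Type} (g : ∀ i, γ i → γ i)
    {α : Type} (f : α → α)
    (x : Σ i : Fin (m + 1), γ i × (Fin i.val → α)) :
    Σ i : Fin (m + 1), γ i × (Fin i.val → α) :=
  ⟨x.1, g x.1 x.2.1, f ∘ x.2.2⟩

/-- Evaluation of the constant-free polynomial `Σ_{i=1}^m A_i X^i` at `(α, f)`. -/
def polyEvalNC {m : ℕ} {γ : Fin m → Type} (g : ∀ i, γ i → γ i)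
    {α : Type} (f : α → α)
    (x : Σ i : Fin m, γ i × (Fin (i.val + 1) → α)) :
    Σ i : Fin m, γ i × (Fin (i.val + 1) → α) :=
  ⟨x.1, g x.1 x.2.1, f ∘ x.2.2⟩

/-- An FDDS is cancelable if it can be canceled from products. -/
def Cancelable {α : Type} (f : α → α) : Prop :=
  ∀ (β γ : Type) [Fintype β] [Fintype γ] (g : β → β) (h : γ → γ),
    FddsIso (Prod.map f g) (Prod.map f h) → FddsIso g h

/-- The cycle `C_b` as an FDDS: the successor map on `ZMod b`. -/
def cycleMap (b : ℕ) (z : ZMod b) : ZMod b := z + 1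

/-- The sum of the cycles `C_{a 1} ⊕ ⋯ ⊕ C_{a m}`. -/
def sumCyclesMap {m : ℕ} (a : Fin m → ℕ) (q : Σ j : Fin m, ZMod (a j)) :
    Σ j : Fin m, ZMod (a j) :=
  ⟨q.1, q.2 + 1⟩

namespace MyAux

variable {α β γ δ α' β' : Type}

theorem iso_refl (f : α → α) : FddsIso f f := ⟨Equiv.refl α, rfl⟩

theorem iso_symm {f : α → α} {g : β → β} (h : FddsIso f g) : FddsIso g f := by
  obtain ⟨e, he⟩ := h
  refine ⟨e.symm, funext fun b => e.injective ?_⟩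
  have h1 := congrFun he (e.symm b)
  simp only [Function.comp_apply] at h1 ⊢
  rw [h1]
  simp

theorem iso_trans {f : α → α} {g : β → β} {h : γ → γ}
    (h1 : FddsIso f g) (h2 : FddsIso g h) : FddsIso f h := by
  obtain ⟨e1, he1⟩ := h1; obtain ⟨e2, he2⟩ := h2
  refine ⟨e1.trans e2, funext fun a => ?_⟩
  have q1 := congrFun he1 a
  have q2 := congrFun he2 (e1 a)
  simp only [Function.comp_apply] at q1 q2 ⊢
  simp [q1, q2]

theorem iso_prod_congr {f : α → α} {g : β → β} {f' : α' → α'} {g' : β' → β'}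
    (h : FddsIso f f') (h' : FddsIso g g') :
    FddsIso (Prod.map f g) (Prod.map f' g') := by
  obtain ⟨e, he⟩ := h; obtain ⟨e', he'⟩ := h'
  refine ⟨e.prodCongr e', funext fun p => ?_⟩
  have q1 := congrFun he p.1
  have q2 := congrFun he' p.2
  simp only [Function.comp_apply] at q1 q2 ⊢
  simp [Prod.map, q1, q2]

theorem iso_sum_congr {f : α → α} {g : β → β} {f' : α' → α'} {g' : β' → β'}
    (h : FddsIso f f') (h' : FddsIso g g') :
    FddsIso (Sum.map f g) (Sum.map f' g') := by
  obtain ⟨e, he⟩ := h; obtain ⟨e', he'⟩ := h'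
  refine ⟨e.sumCongr e', funext fun p => ?_⟩
  cases p with
  | inl s =>
    have q1 := congrFun he s
    simp only [Function.comp_apply] at q1 ⊢
    simp [q1]
  | inr t =>
    have q2 := congrFun he' t
    simp only [Function.comp_apply] at q2 ⊢
    simp [q2]

theorem iso_sum_comm (f : α → α) (g : β → β) :
    FddsIso (Sum.map f g) (Sum.map g f) :=
  ⟨Equiv.sumComm α β, by funext p; cases p <;> rfl⟩

theorem iso_prod_comm (f : α → α) (g : β → β) :
    FddsIso (Prod.map f g) (Prod.map g f) :=
  ⟨Equiv.prodComm α β, by funext p; rfl⟩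

theorem iso_prod_assoc (f : α → α) (g : β → β) (h : γ → γ) :
    FddsIso (Prod.map (Prod.map f g) h) (Prod.map f (Prod.map g h)) :=
  ⟨Equiv.prodAssoc α β γ, by funext p; rfl⟩

theorem iso_prod_sum_distrib (f : α → α) (g : β → β) (h : γ → γ) :
    FddsIso (Prod.map f (Sum.map g h)) (Sum.map (Prod.map f g) (Prod.map f h)) :=
  ⟨Equiv.prodSumDistrib α β γ, by funext ⟨a, p⟩; cases p <;> rfl⟩

/-- `C_n × C_n ≅ n · C_n`. -/
theorem iso_cycle_sq (n : ℕ) :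
    FddsIso (Prod.map (cycleMap n) (cycleMap n))
      (Prod.map (id : ZMod n → ZMod n) (cycleMap n)) := by
  refine ⟨⟨fun p => (p.1 - p.2, p.2), fun p => (p.1 + p.2, p.2), ?_, ?_⟩, ?_⟩
  · intro p; simp
  · intro p; simp
  · funext p
    simp only [Function.comp_apply, Prod.map, cycleMap, Equiv.coe_fn_mk, id]
    congr 1
    ring

end MyAux

namespace MyAux

variable {α β γ δ : Type}

def fixSumEquiv (u : α → α) (v : β → β) :
    {p : α ⊕ β // Sum.map u v p = p} ≃ {s // u s = s} ⊕ {t // v t = t} where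
  toFun := fun q => match q with
    | ⟨Sum.inl s, h⟩ => Sum.inl ⟨s, by simpa using h⟩
    | ⟨Sum.inr t, h⟩ => Sum.inr ⟨t, by simpa using h⟩
  invFun := fun q => match q with
    | Sum.inl ⟨s, h⟩ => ⟨Sum.inl s, by simp [h]⟩
    | Sum.inr ⟨t, h⟩ => ⟨Sum.inr t, by simp [h]⟩
  left_inv := by rintro ⟨(s | t), h⟩ <;> rfl
  right_inv := by rintro (⟨s, h⟩ | ⟨t, h⟩) <;> rfl

def fixProdEquiv (u : α → α) (v : β → β) :
    {p : α × β // Prod.map u v p = p} ≃ {s // u s = s} × {t // v t = t} where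
  toFun := fun q =>
    ⟨⟨q.1.1, congrArg Prod.fst q.2⟩, ⟨q.1.2, congrArg Prod.snd q.2⟩⟩
  invFun := fun q => ⟨(q.1.1, q.2.1), by simp [Prod.map, q.1.2, q.2.2]⟩
  left_inv := by rintro ⟨⟨s, t⟩, h⟩; rfl
  right_inv := by rintro ⟨⟨s, h⟩, ⟨t, h'⟩⟩; rfl

theorem fixCard_eq_of_iso {f : α → α} {g : β → β} (h : FddsIso f g) :
    Nat.card {s // f s = s} = Nat.card {t // g t = t} := by
  obtain ⟨e, he⟩ := h
  refine Nat.card_congr (Equiv.subtypeEquiv e fun s => ?_)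
  have q := congrFun he s
  simp only [Function.comp_apply] at q
  constructor
  · intro hs; rw [← q, hs]
  · intro hs; apply e.injective; rw [q, hs]

theorem fixCard_cycle (n : ℕ) (hn : 1 < n) :
    Nat.card {z : ZMod n // cycleMap n z = z} = 0 := by
  haveI : NeZero n := ⟨by omega⟩
  haveI : IsEmpty {z : ZMod n // cycleMap n z = z} := by
    constructor
    rintro ⟨z, hz⟩
    have h1 : (1 : ZMod n) = 0 := by
      have := hz
      simp only [cycleMap] at this
      have : z + 1 = z + 0 := by rw [this]; ring
      exact add_left_cancel this
    have h2 : ((1 : ℕ) : ZMod n) = 0 := by exact_mod_cast h1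
    rw [ZMod.natCast_eq_zero_iff] at h2
    have := Nat.dvd_one.mp h2
    omega
  exact Nat.card_of_isEmpty

theorem fixCard_id (n : ℕ) :
    Nat.card {z : ZMod n // (id : ZMod n → ZMod n) z = z} = n := by
  have e : {z : ZMod n // (id : ZMod n → ZMod n) z = z} ≃ ZMod n :=
    Equiv.subtypeUnivEquiv fun z => rfl
  rw [Nat.card_congr e, Nat.card_zmod]

theorem cycleMap_bijective (n : ℕ) : Function.Bijective (cycleMap n) :=
  (Equiv.addRight (1 : ZMod n)).bijective

/-- Main induction: non-isomorphic (distinguished by fixed points) permutations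
whose products with each `C_{a j}` agree. -/
theorem aux_exists {m : ℕ} (a : Fin m → ℕ) (ha : ∀ j, 1 < a j) :
    ∃ (σ τ : Type) (_ : Fintype σ) (_ : Fintype τ) (x : σ → σ) (y : τ → τ),
      Function.Bijective x ∧ Function.Bijective y ∧
      Nat.card {s // x s = s} ≠ Nat.card {t // y t = t} ∧
      ∀ j, FddsIso (Prod.map (cycleMap (a j)) x) (Prod.map (cycleMap (a j)) y) := by
  induction m with
  | zero =>
    refine ⟨Unit, Bool, inferInstance, inferInstance, id, id,
      Function.bijective_id, Function.bijective_id, ?_, fun j => j.elim0⟩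
    have e1 : {s : Unit // (id : Unit → Unit) s = s} ≃ Unit :=
      Equiv.subtypeUnivEquiv fun z => rfl
    have e2 : {s : Bool // (id : Bool → Bool) s = s} ≃ Bool :=
      Equiv.subtypeUnivEquiv fun z => rfl
    rw [Nat.card_congr e1, Nat.card_congr e2]
    simp
  | succ m ih =>
    obtain ⟨σ', τ', iσ, iτ, x', y', hx', hy', hfix, hiso⟩ :=
      ih (fun i => a i.succ) (fun i => ha i.succ)
    haveI := iσ; haveI := iτ
    set n := a 0 with hn
    have hn1 : 1 < n := ha 0
    haveI : NeZero n := ⟨by omega⟩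
    refine ⟨(ZMod n × σ') ⊕ (ZMod n × τ'), (ZMod n × τ') ⊕ (ZMod n × σ'),
      inferInstance, inferInstance,
      Sum.map (Prod.map (cycleMap n) x') (Prod.map id y'),
      Sum.map (Prod.map (cycleMap n) y') (Prod.map id x'),
      ?_, ?_, ?_, ?_⟩
    · exact Sum.map_bijective.mpr ⟨((cycleMap_bijective n).prodMap hx'),
        (Function.bijective_id.prodMap hy')⟩
    · exact Sum.map_bijective.mpr ⟨((cycleMap_bijective n).prodMap hy'),
        (Function.bijective_id.prodMap hx')⟩
    · rw [Nat.card_congr (fixSumEquiv _ _), Nat.card_congr (fixSumEquiv _ _),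
        Nat.card_sum, Nat.card_sum,
        Nat.card_congr (fixProdEquiv _ _), Nat.card_congr (fixProdEquiv _ _),
        Nat.card_congr (fixProdEquiv _ _), Nat.card_congr (fixProdEquiv _ _),
        Nat.card_prod, Nat.card_prod, Nat.card_prod, Nat.card_prod,
        fixCard_cycle n hn1, fixCard_id n]
      simp only [zero_mul, zero_add]
      intro hcontra
      exact hfix (Nat.eq_of_mul_eq_mul_left (by omega) hcontra.symm)
    · intro j
      refine Fin.cases ?_ ?_ j
      · -- j = 0 : use C_n × C_n ≅ n C_n and swap
        have step : ∀ (γ₁ γ₂ : Type) (u : γ₁ → γ₁) (v : γ₂ → γ₂),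
            FddsIso (Prod.map (cycleMap (a 0)) (Sum.map (Prod.map (cycleMap n) u) (Prod.map (id : ZMod n → ZMod n) v)))
              (Sum.map (Prod.map (id : ZMod n → ZMod n) (Prod.map (cycleMap n) u))
                (Prod.map (id : ZMod n → ZMod n) (Prod.map (cycleMap n) v))) := by
          intro γ₁ γ₂ u v
          refine iso_trans (iso_prod_sum_distrib _ _ _) (iso_sum_congr ?_ ?_)
          · -- C_n × (C_n × U) ≅ n × (C_n × U)
            refine iso_trans (iso_symm (iso_prod_assoc _ _ _)) ?_
            refine iso_trans (iso_prod_congr (iso_cycle_sq n) (iso_refl u)) ?_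
            exact iso_prod_assoc _ _ _
          · -- C_n × (n × V) ≅ n × (C_n × V)
            refine iso_trans (iso_symm (iso_prod_assoc _ _ _)) ?_
            refine iso_trans (iso_prod_congr (iso_prod_comm _ _) (iso_refl v)) ?_
            exact iso_prod_assoc _ _ _
        refine iso_trans (step σ' τ' x' y') (iso_trans (iso_sum_comm _ _)
          (iso_symm (step τ' σ' y' x')))
      · intro i
        have hi := hiso i
        have step : ∀ (γ₁ γ₂ γ₃ γ₄ : Type) (u : γ₁ → γ₁) (v : γ₂ → γ₂)
            (u' : γ₃ → γ₃) (v' : γ₄ → γ₄) (w w' : ZMod n → ZMod n),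
            FddsIso (Prod.map (cycleMap (a i.succ)) u) (Prod.map (cycleMap (a i.succ)) u') →
            FddsIso (Prod.map (cycleMap (a i.succ)) v) (Prod.map (cycleMap (a i.succ)) v') →
            FddsIso (Prod.map (cycleMap (a i.succ)) (Sum.map (Prod.map w u) (Prod.map w' v)))
              (Prod.map (cycleMap (a i.succ)) (Sum.map (Prod.map w u') (Prod.map w' v'))) := by
          intro γ₁ γ₂ γ₃ γ₄ u v u' v' w w' h1 h2
          refine iso_trans (iso_prod_sum_distrib _ _ _) (iso_trans (iso_sum_congr ?_ ?_)
            (iso_symm (iso_prod_sum_distrib _ _ _)))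
          · -- C × (w × u) ≅ C × (w × u')
            refine iso_trans (iso_symm (iso_prod_assoc _ _ _)) ?_
            refine iso_trans (iso_prod_congr (iso_prod_comm _ _) (iso_refl u)) ?_
            refine iso_trans (iso_prod_assoc _ _ _) ?_
            refine iso_trans (iso_prod_congr (iso_refl w) h1) ?_
            refine iso_trans (iso_symm (iso_prod_assoc _ _ _)) ?_
            refine iso_trans (iso_prod_congr (iso_prod_comm _ _) (iso_refl u')) ?_
            exact iso_prod_assoc _ _ _
          · refine iso_trans (iso_symm (iso_prod_assoc _ _ _)) ?_
            refine iso_trans (iso_prod_congr (iso_prod_comm _ _) (iso_refl v)) ?_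
            refine iso_trans (iso_prod_assoc _ _ _) ?_
            refine iso_trans (iso_prod_congr (iso_refl w') h2) ?_
            refine iso_trans (iso_symm (iso_prod_assoc _ _ _)) ?_
            refine iso_trans (iso_prod_congr (iso_prod_comm _ _) (iso_refl v')) ?_
            exact iso_prod_assoc _ _ _
        exact step σ' τ' τ' σ' x' y' y' x' (cycleMap n) id hi (iso_symm hi)

end MyAux

namespace MyAux

theorem iso_pow_zero {σ τ : Type} (x : σ → σ) (y : τ → τ) :
    FddsIso (powMap x 0) (powMap y 0) := by
  refine ⟨Equiv.ofUnique _ _, ?_⟩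
  funext v
  exact Subsingleton.elim _ _

theorem iso_pow_succ {σ : Type} (x : σ → σ) (k : ℕ) :
    FddsIso (powMap x (k + 1)) (Prod.map x (powMap x k)) := by
  refine ⟨(Fin.consEquiv (fun _ : Fin (k + 1) => σ)).symm, ?_⟩
  funext v
  rfl

theorem iso_prod_pow {γ σ τ : Type} {c : γ → γ} {x : σ → σ} {y : τ → τ}
    (h : FddsIso (Prod.map c x) (Prod.map c y)) (k : ℕ) :
    FddsIso (Prod.map c (powMap x k)) (Prod.map c (powMap y k)) := by
  induction k with
  | zero => exact iso_prod_congr (iso_refl c) (iso_pow_zero x y)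
  | succ k ihk =>
    refine iso_trans (iso_prod_congr (iso_refl c) (iso_pow_succ x k)) ?_
    refine iso_trans (iso_symm (iso_prod_assoc _ _ _)) ?_
    refine iso_trans (iso_prod_congr h (iso_refl (powMap x k))) ?_
    refine iso_trans (iso_prod_congr (iso_prod_comm _ _) (iso_refl (powMap x k))) ?_
    refine iso_trans (iso_prod_assoc _ _ _) ?_
    refine iso_trans (iso_prod_congr (iso_refl y) ihk) ?_
    refine iso_trans (iso_symm (iso_prod_assoc _ _ _)) ?_
    refine iso_trans (iso_prod_congr (iso_prod_comm _ _) (iso_refl (powMap y k))) ?_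
    refine iso_trans (iso_prod_assoc _ _ _) ?_
    exact iso_prod_congr (iso_refl c) (iso_symm (iso_pow_succ y k))

theorem iso_sigma {m : ℕ} (a : Fin m → ℕ) {P Q : Type} (p : P → P) (q : Q → Q)
    (h : ∀ j, FddsIso (Prod.map (cycleMap (a j)) p) (Prod.map (cycleMap (a j)) q)) :
    FddsIso (Prod.map (sumCyclesMap a) p) (Prod.map (sumCyclesMap a) q) := by
  choose φ hφ using h
  refine ⟨(Equiv.sigmaProdDistrib (fun j => ZMod (a j)) P).trans
    ((Equiv.sigmaCongrRight φ).trans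
      (Equiv.sigmaProdDistrib (fun j => ZMod (a j)) Q).symm), ?_⟩
  funext ⟨⟨j, z⟩, w⟩
  have hj := congrFun (hφ j) (z, w)
  simp only [Function.comp_apply, Prod.map_apply, cycleMap] at hj
  simp only [Function.comp_apply, Equiv.trans_apply, Equiv.sigmaProdDistrib,
    Equiv.coe_fn_mk, Equiv.coe_fn_symm_mk, Equiv.sigmaCongrRight_apply,
    Prod.map_apply, sumCyclesMap, cycleMap]
  rw [hj]
  simp [Prod.map, cycleMap]

end MyAux

/-- If `A = C_{a 1} ⊕ ⋯ ⊕ C_{a m}` is a sum of cycles of lengths all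
greater than `1` and `k ≥ 1`, then there are two non-isomorphic permutation FDDS
`X, Y` with `A_j × X^k ≅ A_j × Y^k` for every `j`, and hence `A × X^k ≅ A × Y^k`. -/
theorem sum_cycles_monomial_not_injective {m : ℕ} (a : Fin m → ℕ)
    (ha : ∀ j, 1 < a j) (k : ℕ) (hk : 1 ≤ k) :
    ∃ (σ τ : Type) (_ : Fintype σ) (_ : Fintype τ) (x : σ → σ) (y : τ → τ),
      Function.Bijective x ∧ Function.Bijective y ∧ ¬ FddsIso x y ∧
      (∀ j : Fin m, FddsIso (Prod.map (cycleMap (a j)) (powMap x k))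
        (Prod.map (cycleMap (a j)) (powMap y k))) ∧
      FddsIso (Prod.map (sumCyclesMap a) (powMap x k))
        (Prod.map (sumCyclesMap a) (powMap y k)) := by
  obtain ⟨σ, τ, iσ, iτ, x, y, hx, hy, hfix, hiso⟩ := MyAux.aux_exists a ha
  have hpow : ∀ j : Fin m, FddsIso (Prod.map (cycleMap (a j)) (powMap x k))
      (Prod.map (cycleMap (a j)) (powMap y k)) :=
    fun j => MyAux.iso_prod_pow (hiso j) k
  exact ⟨σ, τ, iσ, iτ, x, y, hx, hy,
    fun h => hfix (MyAux.fixCard_eq_of_iso h), hpow,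
    MyAux.iso_sigma a (powMap x k) (powMap y k) hpow⟩
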